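/- Let (X,≤) be a suborderable metrizable Hausdorff space with infinitely many connected components, with compatible linear order ≤ and compatible convex metric ρ, and let S : T → D[X] be a discrete sieve on X indexed by a pruned ω-levelled tree T such that: each family {S(t) : t ∈ T(n)}, n < ω, is a partition of X; S maps T(n) into D[X,2^{-n}] for each n < ω; and for every non-degenerate component C of X with branch β satisfying C ⊆ ⋂_{t∈β} S(t), every n ≥ κ[C], t ∈ β ∩ T(n), p ∈ β ∩ node(t), and s ∈ node(t) with s ≠ p, one has diam(S(s)) ≤ 2^{-n+1}. Then for every clopen set U ⊆ X and every x ∈ U there exists t ∈ β[x] with S(t) ⊆ U, where β[x] = {t ∈ T : x ∈ S(t)} is the branch determined by x. -/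

import Mathlib

open Topology

section MetricSuborderable

variable {X : Type*} [MetricSpace X] [LinearOrder X]

/-- `(←, C)`: the points lying strictly below every point of `C`. -/
def leftOf (C : Set X) : Set X := {x | ∀ c ∈ C, x < c}

/-- `(C, →)`: the points lying strictly above every point of `C`. -/
def rightOf (C : Set X) : Set X := {x | ∀ c ∈ C, c < x}

/-- `ℓ(C) = |cl((←, C)) ∩ C|`. -/
noncomputable def ell (C : Set X) : ℕ := (closure (leftOf C) ∩ C).ncard

/-- `r(C) = |C ∩ cl((C, →))|`. -/
noncomputable def rr (C : Set X) : ℕ := (C ∩ closure (rightOf C)).ncard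

/-- The open `δ`-neighbourhood `O(C, δ)` of a set `C`. -/
def ballAround (C : Set X) (δ : ℝ) : Set X := {x | ∃ c ∈ C, dist x c < δ}

/-- The neighbourhood `Δ(C, ε)` of a component `C`; note that
`(←, C] = (C, →)ᶜ` and `[C, →) = (←, C)ᶜ`. -/
noncomputable def Delta (C : Set X) (ε : ℝ) : Set X :=
  if ell C = 0 ∧ rr C = 0 then C
  else if ell C ≠ 0 ∧ rr C = 0 then ballAround C (ε / 2) ∩ (rightOf C)ᶜ
  else if ell C = 0 ∧ rr C ≠ 0 then ballAround C (ε / 2) ∩ (leftOf C)ᶜ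
  else ballAround C (ε / 2)

/-- `D[X]`: the clopen sets that are a connected component or meet infinitely
many connected components. -/
def DD (X : Type*) [TopologicalSpace X] : Set (Set X) :=
  {U | IsClopen U ∧ ((∃ x : X, U = connectedComponent x) ∨
    {C : Set X | ∃ x ∈ U, C = connectedComponent x}.Infinite)}

/-- `C_ε[U]`: the connected components of `U` of diameter at least `ε`. -/
noncomputable def compsGE (U : Set X) (ε : ℝ) : Set (Set X) :=
  {C | (∃ x ∈ U, C = connectedComponentIn U x) ∧
    ENNReal.ofReal ε ≤ EMetric.diam C}

/-- `D[X, ε]`: the members of `D[X]` of diameter `< ε`, or contained in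
`Δ(C, ε)` for some component `C ∈ C_ε[U]`. -/
noncomputable def DXeps (X : Type*) [MetricSpace X] [LinearOrder X] (ε : ℝ) :
    Set (Set X) :=
  {U | U ∈ DD X ∧ (EMetric.diam U < ENNReal.ofReal ε ∨
    ∃ C ∈ compsGE U ε, U ⊆ Delta C ε)}

/-- `κ[C]`: the least `n` with `diam C ≥ 2^(-n)`. -/
noncomputable def kappa (C : Set X) : ℕ :=
  sInf {n : ℕ | ENNReal.ofReal ((2 : ℝ) ^ (-(n : ℤ))) ≤ EMetric.diam C}

/-- `A < B` pointwise for subsets of a linear order. -/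
def setBelow (A B : Set X) : Prop := ∀ a ∈ A, ∀ b ∈ B, a < b

end MetricSuborderable

section Tree

variable {T : Type*} (tle : T → T → Prop)

/-- The strict relation associated to `tle`. -/
def tlt (a b : T) : Prop := tle a b ∧ a ≠ b

/-- The union of the first `n` levels of the tree `(T, tle)`. -/
def treeBelow : ℕ → Set T
  | 0 => ∅
  | n + 1 => treeBelow n ∪ {t | t ∉ treeBelow n ∧ ∀ s, tlt tle s t → s ∈ treeBelow n}

/-- The `n`-th level `T(n)`: the minimal elements of the complement of the
union of the previous levels. -/
def treeLevel (n : ℕ) : Set T :=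
  {t | t ∉ treeBelow tle n ∧ ∀ s, tlt tle s t → s ∈ treeBelow tle n}

/-- `node t`: the immediate successors of `t`. -/
def node (t : T) : Set T :=
  {s | tlt tle t s ∧ ¬∃ u, tlt tle t u ∧ tlt tle u s}

/-- `(T, tle)` is an `ω`-levelled tree: a partial order in which the set of
predecessors of each point is a finite chain and every point lies on some
(finite) level. -/
def IsOmegaTree : Prop :=
  (∀ a, tle a a) ∧ (∀ a b, tle a b → tle b a → a = b) ∧
  (∀ a b c, tle a b → tle b c → tle a c) ∧
  (∀ t, {s | tle s t}.Finite) ∧ (∀ t, IsChain tle {s | tle s t}) ∧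
  (∀ t, ∃ n : ℕ, t ∈ treeLevel tle n)

/-- The tree is pruned: every node has an immediate successor. -/
def Pruned : Prop := ∀ t : T, (node tle t).Nonempty

/-- The tree is anti-binary: neither the bottom level nor any node has exactly
two elements. -/
def AntiBinary : Prop :=
  (treeLevel tle 0).encard ≠ 2 ∧ ∀ t : T, (node tle t).encard ≠ 2

/-- A sieve on `X` indexed by the tree `(T, tle)`. -/
def IsSieve {X : Type*} (S : T → Set X) : Prop :=
  (∀ t, (S t).Nonempty) ∧ (⋃ t ∈ treeLevel tle 0, S t) = Set.univ ∧
  ∀ t, S t = ⋃ s ∈ node tle t, S s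

/-- A discrete sieve: each level yields a discrete cover of `X`. -/
def IsDiscreteSieve {X : Type*} [TopologicalSpace X] (S : T → Set X) : Prop :=
  IsSieve tle S ∧ ∀ n : ℕ,
    (⋃ t ∈ treeLevel tle n, S t) = Set.univ ∧
    ∀ x : X, ∃ N ∈ nhds x,
      {t | t ∈ treeLevel tle n ∧ (S t ∩ N).Nonempty}.Subsingleton

end Tree


set_option linter.unusedSectionVars false

section TreeAux2

variable {T : Type*} (tle : T → T → Prop)

lemma treeBelow_succ (n : ℕ) :
    treeBelow tle (n + 1) = treeBelow tle n ∪ treeLevel tle n := rfl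

lemma treeBelow_mono {m n : ℕ} (h : m ≤ n) : treeBelow tle m ⊆ treeBelow tle n := by
  induction h with
  | refl => exact subset_rfl
  | step h ih => exact ih.trans (by rw [treeBelow_succ]; exact Set.subset_union_left)

lemma mem_treeBelow_of_tlt :
    ∀ (k : ℕ) {s u : T}, s ∈ treeBelow tle (k + 1) → tlt tle u s → u ∈ treeBelow tle k := by
  intro k
  induction k with
  | zero =>
    intro s u hs hu
    rcases hs with h | h
    · exact absurd h (Set.notMem_empty s)
    · exact h.2 u hu
  | succ k ih =>
    intro s u hs hu
    rcases hs with h | h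
    · exact treeBelow_mono tle (Nat.le_succ k) (ih h hu)
    · exact h.2 u hu

lemma treeLevel_subset (n : ℕ) : treeLevel tle n ⊆ treeBelow tle (n + 1) := by
  rw [treeBelow_succ]; exact Set.subset_union_right

lemma eq_of_treeLevel_of_tle {n : ℕ} {t t' : T}
    (ht : t ∈ treeLevel tle n) (ht' : t' ∈ treeLevel tle n) (h : tle t t') : t = t' := by
  by_contra hne
  exact ht.1 (ht'.2 t ⟨h, hne⟩)

lemma node_treeLevel (hchain : ∀ t, IsChain tle {s | tle s t})
    {n : ℕ} {t s : T} (ht : t ∈ treeLevel tle n) (hs : s ∈ node tle t) :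
    s ∈ treeLevel tle (n + 1) := by
  constructor
  · intro hmem
    exact ht.1 (mem_treeBelow_of_tlt tle n hmem hs.1)
  · intro u hu
    by_cases hut : u = t
    · subst hut; exact treeLevel_subset tle n ht
    have hcomp := hchain s (show u ∈ {v | tle v s} from hu.1)
      (show t ∈ {v | tle v s} from hs.1.1) hut
    rcases hcomp with h | h
    · rw [treeBelow_succ]
      exact Set.mem_union_left _ (ht.2 u ⟨h, hut⟩)
    · exact absurd ⟨u, ⟨h, fun he => hut he.symm⟩, hu⟩ hs.2

lemma treeLevel_disjoint' {n m : ℕ} (h : n < m) {t : T}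
    (ht : t ∈ treeLevel tle n) (ht' : t ∈ treeLevel tle m) : False :=
  ht'.1 (treeBelow_mono tle h (treeLevel_subset tle n ht))

end TreeAux2

section EpsAux

lemma e_pos (m : ℕ) : 0 < (2:ℝ) ^ (-(m:ℤ)) := by positivity

lemma e_succ (m : ℕ) : (2:ℝ) ^ (-((m+1:ℕ):ℤ)) = (2:ℝ) ^ (-(m:ℤ)) / 2 := by
  have h : (-((m+1:ℕ):ℤ)) = (-(m:ℤ)) + (-1) := by push_cast; ring
  rw [h, zpow_add₀ (two_ne_zero), zpow_neg_one]
  ring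

lemma e_anti {m n : ℕ} (h : m ≤ n) : (2:ℝ) ^ (-(n:ℤ)) ≤ (2:ℝ) ^ (-(m:ℤ)) := by
  apply zpow_le_zpow_right₀ (by norm_num : (1:ℝ) ≤ 2)
  omega

lemma e_eq_pow (m : ℕ) : (2:ℝ) ^ (-(m:ℤ)) = (1/2:ℝ) ^ m := by
  rw [zpow_neg, zpow_natCast, ← inv_pow, one_div]

lemma e_small {d : ℝ} (hd : 0 < d) (N : ℕ) : ∃ m : ℕ, N ≤ m ∧ (2:ℝ) ^ (-(m:ℤ)) < d := by
  obtain ⟨k, hk⟩ := exists_pow_lt_of_lt_one hd (by norm_num : (1/2:ℝ) < 1)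
  refine ⟨max N k, le_max_left _ _, ?_⟩
  rw [e_eq_pow]
  calc (1/2:ℝ) ^ (max N k) ≤ (1/2:ℝ) ^ k :=
        pow_le_pow_of_le_one (by norm_num) (by norm_num) (le_max_right N k)
    _ < d := hk

lemma e_one_sub (m : ℕ) : (2:ℝ) ^ ((1:ℤ) - (m:ℤ)) = 2 * (2:ℝ) ^ (-(m:ℤ)) := by
  rw [sub_eq_add_neg, zpow_add₀ (two_ne_zero)]
  norm_num

end EpsAux

section OrderAux

variable {X : Type*} [MetricSpace X] [LinearOrder X]

lemma my_nonempty_of_ncard_ne_zero {s : Set X} (h : s.ncard ≠ 0) : s.Nonempty := by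
  rcases s.eq_empty_or_nonempty with rfl | h'
  · simp [Set.ncard_empty] at h
  · exact h'

lemma closure_leftOf_le (hIoi : ∀ a : X, IsOpen (Set.Ioi a)) {C : Set X} {a c : X}
    (ha : a ∈ closure (leftOf C)) (hc : c ∈ C) : a ≤ c := by
  have h1 : leftOf C ⊆ Set.Iic c := fun y hy => (hy c hc).le
  have h2 : IsClosed (Set.Iic c) := by
    rw [← isOpen_compl_iff, Set.compl_Iic]; exact hIoi c
  exact closure_minimal h1 h2 ha

lemma closure_rightOf_ge (hIio : ∀ a : X, IsOpen (Set.Iio a)) {C : Set X} {b c : X}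
    (hb : b ∈ closure (rightOf C)) (hc : c ∈ C) : c ≤ b := by
  have h1 : rightOf C ⊆ Set.Ici c := fun y hy => (hy c hc).le
  have h2 : IsClosed (Set.Ici c) := by
    rw [← isOpen_compl_iff, Set.compl_Ici]; exact hIio c
  exact closure_minimal h1 h2 hb

lemma uniqL (hIoi : ∀ a : X, IsOpen (Set.Ioi a)) {C : Set X} {a a' : X}
    (ha : a ∈ closure (leftOf C) ∩ C) (ha' : a' ∈ closure (leftOf C) ∩ C) : a = a' :=
  le_antisymm (closure_leftOf_le hIoi ha.1 ha'.2) (closure_leftOf_le hIoi ha'.1 ha.2)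

lemma uniqR (hIio : ∀ a : X, IsOpen (Set.Iio a)) {C : Set X} {b b' : X}
    (hb : b ∈ C ∩ closure (rightOf C)) (hb' : b' ∈ C ∩ closure (rightOf C)) : b = b' :=
  le_antisymm (closure_rightOf_ge hIio hb'.2 hb.1) (closure_rightOf_ge hIio hb.2 hb'.1)

lemma cc_convex (hIio : ∀ a : X, IsOpen (Set.Iio a)) (hIoi : ∀ a : X, IsOpen (Set.Ioi a))
    (w : X) {a b y : X} (ha : a ∈ connectedComponent w) (hb : b ∈ connectedComponent w)
    (hay : a ≤ y) (hyb : y ≤ b) : y ∈ connectedComponent w := by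
  by_contra hy
  have hsub : connectedComponent w ⊆ Set.Iio y ∪ Set.Ioi y := by
    intro z hz
    rcases lt_trichotomy z y with h | h | h
    · exact Or.inl h
    · exact absurd (h ▸ hz) hy
    · exact Or.inr h
  have hne1 : (connectedComponent w ∩ Set.Iio y).Nonempty :=
    ⟨a, ha, lt_of_le_of_ne hay (fun h => hy (h ▸ ha))⟩
  have hne2 : (connectedComponent w ∩ Set.Ioi y).Nonempty :=
    ⟨b, hb, lt_of_le_of_ne hyb (fun h => hy (h ▸ hb))⟩
  obtain ⟨z, _, hz1, hz2⟩ :=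
    isPreconnected_connectedComponent _ _ (hIio y) (hIoi y) hsub hne1 hne2
  exact absurd hz2 (not_lt.mpr hz1.le)

lemma cc_side (hIio : ∀ a : X, IsOpen (Set.Iio a)) (hIoi : ∀ a : X, IsOpen (Set.Ioi a))
    {w y : X} (hy : y ∉ connectedComponent w) :
    y ∈ leftOf (connectedComponent w) ∨ y ∈ rightOf (connectedComponent w) := by
  by_cases hL : ∀ c ∈ connectedComponent w, y < c
  · exact Or.inl hL
  push_neg at hL
  obtain ⟨c1, hc1, hc1y⟩ := hL
  right
  intro c hc
  by_contra hcy
  push_neg at hcy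
  exact hy (cc_convex hIio hIoi w hc1 hc hc1y hcy)

lemma ccIn_eq {F : Set X} (hF : IsClopen F) {w : X} (hw : w ∈ F) :
    connectedComponentIn F w = connectedComponent w := by
  apply Set.Subset.antisymm
  · exact isPreconnected_connectedComponentIn.subset_connectedComponent
      (mem_connectedComponentIn hw)
  · exact isPreconnected_connectedComponent.subset_connectedComponentIn
      mem_connectedComponent (hF.connectedComponent_subset hw)

lemma delta_cases (hconv : ∀ x a b y : X, x ≤ a → a ≤ b → b ≤ y → dist a b ≤ dist x y)
    (hIio : ∀ a : X, IsOpen (Set.Iio a)) (hIoi : ∀ a : X, IsOpen (Set.Ioi a))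
    (w : X) (eps : ℝ) {y : X}
    (hy : y ∈ Delta (connectedComponent w) eps) :
    y ∈ connectedComponent w ∨
    (∃ a, a ∈ closure (leftOf (connectedComponent w)) ∩ connectedComponent w ∧
       dist y a < eps / 2 ∧ y ∈ leftOf (connectedComponent w)) ∨
    (∃ b, b ∈ connectedComponent w ∩ closure (rightOf (connectedComponent w)) ∧
       dist y b < eps / 2 ∧ y ∈ rightOf (connectedComponent w)) := by
  set C := connectedComponent w with hCdef
  by_cases hyC : y ∈ C
  · exact Or.inl hyC
  have hside := cc_side hIio hIoi (show y ∉ connectedComponent w from hyC)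
  unfold Delta at hy
  split_ifs at hy with h1 h2 h3
  · exact Or.inl hy
  · rcases hside with hL | hR
    · obtain ⟨a, ha⟩ := my_nonempty_of_ncard_ne_zero h2.1
      obtain ⟨c, hc, hdc⟩ := hy.1
      refine Or.inr (Or.inl ⟨a, ha, lt_of_le_of_lt ?_ hdc, hL⟩)
      exact hconv y y a c le_rfl (hL a ha.2).le (closure_leftOf_le hIoi ha.1 hc)
    · exact absurd hR hy.2
  · rcases hside with hL | hR
    · exact absurd hL hy.2
    · obtain ⟨b, hb⟩ := my_nonempty_of_ncard_ne_zero h3.2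
      obtain ⟨c, hc, hdc⟩ := hy.1
      refine Or.inr (Or.inr ⟨b, hb, lt_of_le_of_lt ?_ hdc, hR⟩)
      have h := hconv c b y y (closure_rightOf_ge hIio hb.2 hc) (hR b hb.1).le le_rfl
      rwa [dist_comm y b, dist_comm y c]
  · obtain ⟨c, hc, hdc⟩ := hy
    rcases hside with hL | hR
    · have hl : ell C ≠ 0 := by tauto
      obtain ⟨a, ha⟩ := my_nonempty_of_ncard_ne_zero hl
      refine Or.inr (Or.inl ⟨a, ha, lt_of_le_of_lt ?_ hdc, hL⟩)
      exact hconv y y a c le_rfl (hL a ha.2).le (closure_leftOf_le hIoi ha.1 hc)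
    · have hr : rr C ≠ 0 := by tauto
      obtain ⟨b, hb⟩ := my_nonempty_of_ncard_ne_zero hr
      refine Or.inr (Or.inr ⟨b, hb, lt_of_le_of_lt ?_ hdc, hR⟩)
      have h := hconv c b y y (closure_rightOf_ge hIio hb.2 hc) (hR b hb.1).le le_rfl
      rwa [dist_comm y b, dist_comm y c]

end OrderAux

/-- Lemma 5.3: in a metrizable suborderable space `(X, ≤)` with compatible
convex metric and infinitely many connected components, let `S : T → D[X]` be
a discrete sieve on a pruned `ω`-levelled tree whose levels are partitions of
`X`, with `S(T(n)) ⊆ D[X, 2^(-n)]`, and satisfying the diameter condition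
(4.1) for non-degenerate components. Then for every clopen `U ⊆ X` and every
`x ∈ U` there is `t ∈ β[x]` (i.e. `x ∈ S t`) with `S t ⊆ U`. -/
theorem stmt19 {X : Type*} {T : Type*} [MetricSpace X] [LinearOrder X]
    (hconv : ∀ x a b y : X, x ≤ a → a ≤ b → b ≤ y → dist a b ≤ dist x y)
    (hIio : ∀ a : X, IsOpen (Set.Iio a)) (hIoi : ∀ a : X, IsOpen (Set.Ioi a))
    (hbase : ∀ (x : X) (U : Set X), IsOpen U → x ∈ U →
      ∃ V : Set X, IsOpen V ∧ x ∈ V ∧ V ⊆ U ∧ V.OrdConnected)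
    (hinf : (Set.range fun x : X => connectedComponent x).Infinite)
    (tle : T → T → Prop) (htree : IsOmegaTree tle) (hpr : Pruned tle)
    (S : T → Set X) (hS : IsDiscreteSieve tle S)
    (hpart : ∀ n : ℕ, ∀ t ∈ treeLevel tle n, ∀ t' ∈ treeLevel tle n,
      t ≠ t' → S t ∩ S t' = ∅)
    (hDD : ∀ t, S t ∈ DD X)
    (hDXe : ∀ n : ℕ, ∀ t ∈ treeLevel tle n, S t ∈ DXeps X ((2 : ℝ) ^ (-(n : ℤ))))
    (hdiam : ∀ x₀ : X, (connectedComponent x₀).Nontrivial →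
      ∀ β : Set T, IsMaxChain tle β →
        connectedComponent x₀ ⊆ ⋂ t ∈ β, S t →
        ∀ n : ℕ, kappa (connectedComponent x₀) ≤ n →
          ∀ t ∈ β ∩ treeLevel tle n, ∀ p ∈ β ∩ node tle t,
            ∀ s ∈ node tle t, s ≠ p →
              EMetric.diam (S s) ≤ ENNReal.ofReal ((2 : ℝ) ^ ((1 : ℤ) - n)))
    (U : Set X) (hU : IsClopen U) (x : X) (hx : x ∈ U) :
    ∃ t, x ∈ S t ∧ S t ⊆ U := by
  classical
  by_contra H0
  push_neg at H0
  obtain ⟨hrefl, hantisym, htrans, hfin, hchain, hlevels⟩ := htree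
  have hclopen : ∀ t, IsClopen (S t) := fun t => (hDD t).1
  have hcomp_sub : ∀ (w : X) (t : T), w ∈ S t → connectedComponent w ⊆ S t :=
    fun w t h => (hclopen t).connectedComponent_subset h
  have S_uniq : ∀ {w : X} {n : ℕ} {t t' : T}, t ∈ treeLevel tle n → t' ∈ treeLevel tle n →
      w ∈ S t → w ∈ S t' → t = t' := by
    intro w n t t' ht ht' hw hw'
    by_contra hne
    have h := hpart n t ht t' ht' hne
    have : w ∈ S t ∩ S t' := ⟨hw, hw'⟩
    rw [h] at this
    exact this
  have hstep : ∀ (w : X) (t : T), w ∈ S t → ∃ s, s ∈ node tle t ∧ w ∈ S s := by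
    intro w t hw
    have h := hS.1.2.2 t
    rw [h] at hw
    simpa using hw
  have hbase : ∀ w : X, ∃ u, u ∈ treeLevel tle 0 ∧ w ∈ S u := by
    intro w
    have h : w ∈ (⋃ t ∈ treeLevel tle 0, S t) := by rw [hS.1.2.1]; trivial
    simpa using h
  have branch : ∀ w : X, ∃ g : ℕ → T,
      (∀ n, g n ∈ treeLevel tle n ∧ w ∈ S (g n)) ∧ (∀ n, g (n+1) ∈ node tle (g n)) := by
    intro w
    obtain ⟨u0, hu0l, hu0w⟩ := hbase w
    have step' : ∀ p : {u : T // w ∈ S u}, {v : {u : T // w ∈ S u} // v.1 ∈ node tle p.1} :=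
      fun p => ⟨⟨(hstep w p.1 p.2).choose, (hstep w p.1 p.2).choose_spec.2⟩,
        (hstep w p.1 p.2).choose_spec.1⟩
    let g' : ℕ → {u : T // w ∈ S u} := fun n => Nat.rec ⟨u0, hu0w⟩ (fun _ p => (step' p).1) n
    have hnode : ∀ n, (g' (n+1)).1 ∈ node tle (g' n).1 := fun n => (step' (g' n)).2
    have hlev : ∀ n, (g' n).1 ∈ treeLevel tle n := by
      intro n
      induction n with
      | zero => exact hu0l
      | succ n ih => exact node_treeLevel tle hchain ih (hnode n)
    exact ⟨fun n => (g' n).1, fun n => ⟨hlev n, (g' n).2⟩, hnode⟩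
  have branch_le : ∀ (g : ℕ → T), (∀ n, g (n+1) ∈ node tle (g n)) →
      ∀ m n : ℕ, m ≤ n → tle (g m) (g n) := by
    intro g hg m n h
    induction h with
    | refl => exact hrefl _
    | step h ih => exact htrans _ _ _ ih (hg _).1.1
  have branch_max : ∀ (w : X) (g : ℕ → T), (∀ n, g n ∈ treeLevel tle n ∧ w ∈ S (g n)) →
      (∀ n, g (n+1) ∈ node tle (g n)) → IsMaxChain tle {t | w ∈ S t} := by
    intro w g hg hgn
    constructor
    · rintro a ha b hb hne
      obtain ⟨n, hn⟩ := hlevels a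
      obtain ⟨m, hm⟩ := hlevels b
      have han : a = g n := S_uniq hn (hg n).1 ha (hg n).2
      have hbm : b = g m := S_uniq hm (hg m).1 hb (hg m).2
      rw [han, hbm]
      rcases le_total n m with h | h
      · exact Or.inl (branch_le g hgn n m h)
      · exact Or.inr (branch_le g hgn m n h)
    · intro γ hγ hsub
      apply hsub.antisymm
      intro u hu
      obtain ⟨m, hm⟩ := hlevels u
      have hgm : g m ∈ γ := hsub ((hg m).2)
      by_cases he : u = g m
      · rw [he]; exact (hg m).2
      · rcases hγ hu hgm he with h | h
        · have : u = g m := eq_of_treeLevel_of_tle tle hm (hg m).1 h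
          rw [this]; exact (hg m).2
        · have : g m = u := eq_of_treeLevel_of_tle tle (hg m).1 hm h
          rw [← this]; exact (hg m).2
  obtain ⟨f, hf, hfnode⟩ := branch x
  have hCxU : connectedComponent x ⊆ U := hU.connectedComponent_subset hx
  obtain ⟨rx, hrx0, hrxU⟩ := Metric.isOpen_iff.mp hU.isOpen x hx
  have hNbd : ∃ r > 0, ∀ y a : X,
      (a ∈ closure (leftOf (connectedComponent x)) ∩ connectedComponent x ∨
        a ∈ connectedComponent x ∩ closure (rightOf (connectedComponent x))) →
      dist y a < r → y ∈ U := by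
    have hball : ∀ a ∈ connectedComponent x, ∃ r > 0, Metric.ball a r ⊆ U := fun a ha =>
      Metric.isOpen_iff.mp hU.isOpen a (hCxU ha)
    rcases em ((closure (leftOf (connectedComponent x)) ∩ connectedComponent x).Nonempty) with
      ⟨a0, ha0⟩ | hL
    · rcases em ((connectedComponent x ∩ closure (rightOf (connectedComponent x))).Nonempty) with
        ⟨b0, hb0⟩ | hR
      · obtain ⟨ra, hra0, hraU⟩ := hball a0 ha0.2
        obtain ⟨rb, hrb0, hrbU⟩ := hball b0 hb0.1
        refine ⟨min ra rb, lt_min hra0 hrb0, ?_⟩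
        rintro y a (ha | ha) hd
        · have he : a = a0 := uniqL hIoi ha ha0
          rw [he] at hd
          exact hraU (Metric.mem_ball.mpr (lt_of_lt_of_le hd (min_le_left _ _)))
        · have he : a = b0 := uniqR hIio ha hb0
          rw [he] at hd
          exact hrbU (Metric.mem_ball.mpr (lt_of_lt_of_le hd (min_le_right _ _)))
      · obtain ⟨ra, hra0, hraU⟩ := hball a0 ha0.2
        refine ⟨ra, hra0, ?_⟩
        rintro y a (ha | ha) hd
        · have he : a = a0 := uniqL hIoi ha ha0
          rw [he] at hd
          exact hraU (Metric.mem_ball.mpr hd)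
        · exact absurd ⟨a, ha⟩ hR
    · rcases em ((connectedComponent x ∩ closure (rightOf (connectedComponent x))).Nonempty) with
        ⟨b0, hb0⟩ | hR
      · obtain ⟨rb, hrb0, hrbU⟩ := hball b0 hb0.1
        refine ⟨rb, hrb0, ?_⟩
        rintro y a (ha | ha) hd
        · exact absurd ⟨a, ha⟩ hL
        · have he : a = b0 := uniqR hIio ha hb0
          rw [he] at hd
          exact hrbU (Metric.mem_ball.mpr hd)
      · refine ⟨1, one_pos, ?_⟩
        rintro y a (ha | ha) hd
        · exact absurd ⟨a, ha⟩ hL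
        · exact absurd ⟨a, ha⟩ hR
  obtain ⟨r, hr0, hrU⟩ := hNbd
  obtain ⟨N, -, hN⟩ := e_small (show (0:ℝ) < min rx r / 4 by positivity) 0
  have heN : ∀ m, N ≤ m → (2:ℝ) ^ (-(m:ℤ)) < min rx r / 4 :=
    fun m hm => lt_of_le_of_lt (e_anti hm) hN
  have main : ∀ m : ℕ, ∃ w : X, N ≤ m →
      w ∈ S (f m) ∧
      ENNReal.ofReal ((2:ℝ) ^ (-(m:ℤ))) ≤ EMetric.diam (connectedComponent w) ∧
      S (f m) ⊆ Delta (connectedComponent w) ((2:ℝ) ^ (-(m:ℤ))) ∧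
      x ∉ connectedComponent w := by
    intro m
    by_cases hm : N ≤ m
    swap
    · exact ⟨x, fun h => absurd h hm⟩
    have hDX := hDXe m (f m) (hf m).1
    rcases hDX.2 with hsmall | ⟨C, hCmem, hCsub⟩
    · exfalso
      apply H0 (f m) (hf m).2
      intro y hy
      have hd : dist x y < (2:ℝ) ^ (-(m:ℤ)) := edist_lt_ofReal.mp
        (lt_of_le_of_lt (EMetric.edist_le_diam_of_mem (hf m).2 hy) hsmall)
      apply hrxU
      rw [Metric.mem_ball, dist_comm]
      have := heN m hm
      have := min_le_left rx r
      linarith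
    · obtain ⟨⟨w, hwmem, hCeq⟩, hCdiam⟩ := hCmem
      have hCeq' : C = connectedComponent w := by
        rw [hCeq, ccIn_eq (hclopen (f m)) hwmem]
      rw [hCeq'] at hCdiam hCsub
      refine ⟨w, fun _ => ⟨hwmem, hCdiam, hCsub, ?_⟩⟩
      intro hxC
      have hCw : connectedComponent w = connectedComponent x := connectedComponent_eq hxC
      apply H0 (f m) (hf m).2
      intro y hy
      rcases delta_cases hconv hIio hIoi w _ (hCsub hy) with hyC | ⟨a, ha, hda, -⟩ | ⟨b, hb, hdb, -⟩
      · exact hCxU (hCw ▸ hyC)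
      · rw [hCw] at ha
        apply hrU y a (Or.inl ha)
        have := heN m hm
        have := min_le_right rx r
        linarith [e_pos m]
      · rw [hCw] at hb
        apply hrU y b (Or.inr hb)
        have := heN m hm
        have := min_le_right rx r
        linarith [e_pos m]
  choose wf hwf using main
  have hstepC : ∀ m, N ≤ m → connectedComponent (wf (m+1)) = connectedComponent (wf m) := by
    intro m hm
    obtain ⟨hw_mem, hw_diam, hw_sub, hw_nx⟩ := hwf m hm
    obtain ⟨hw1_mem, hw1_diam, hw1_sub, hw1_nx⟩ := hwf (m+1) (le_trans hm (Nat.le_succ m))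
    obtain ⟨g, hg, hgnode⟩ := branch (wf m)
    have hgm : g m = f m := S_uniq (hg m).1 (hf m).1 (hg m).2 hw_mem
    have hwfm1 : wf m ∈ S (f (m+1)) := by
      by_cases hsp : f (m+1) = g (m+1)
      · rw [hsp]; exact (hg (m+1)).2
      exfalso
      have hnontriv : (connectedComponent (wf m)).Nontrivial := by
        rw [← Set.not_subsingleton_iff]
        intro hss
        rw [show EMetric.diam (connectedComponent (wf m)) = 0 from EMetric.diam_subsingleton hss, le_zero_iff] at hw_diam
        have := ENNReal.ofReal_pos.mpr (e_pos m)
        rw [hw_diam] at this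
        exact lt_irrefl _ this
      have hkap : kappa (connectedComponent (wf m)) ≤ m := Nat.sInf_le hw_diam
      have hsib := hdiam (wf m) hnontriv {t | wf m ∈ S t}
        (branch_max (wf m) g hg hgnode)
        (Set.subset_iInter₂ fun t ht => hcomp_sub (wf m) t ht)
        m hkap (f m) ⟨hw_mem, (hf m).1⟩ (g (m+1))
        ⟨(hg (m+1)).2, by rw [← hgm]; exact hgnode m⟩
        (f (m+1)) (hfnode m) hsp
      apply H0 (f (m+1)) (hf (m+1)).2
      intro y hy
      have hd : dist x y ≤ (2:ℝ) ^ ((1:ℤ) - (m:ℤ)) := (edist_le_ofReal (by positivity)).mp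
        (le_trans (EMetric.edist_le_diam_of_mem (hf (m+1)).2 hy) hsib)
      apply hrxU
      rw [Metric.mem_ball, dist_comm]
      rw [e_one_sub m] at hd
      have := heN m hm
      have := min_le_left rx r
      linarith
    have hCm_sub : connectedComponent (wf m) ⊆
        Delta (connectedComponent (wf (m+1))) ((2:ℝ) ^ (-((m+1:ℕ):ℤ))) :=
      fun z hz => hw1_sub (hcomp_sub _ _ hwfm1 hz)
    by_contra hne
    have hdisj : ∀ z, z ∈ connectedComponent (wf m) → z ∈ connectedComponent (wf (m+1)) → False := by
      intro z h1 h2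
      exact hne ((connectedComponent_eq h2).trans (connectedComponent_eq h1).symm)
    have info : ∀ z ∈ connectedComponent (wf m),
        (∃ a, a ∈ closure (leftOf (connectedComponent (wf (m+1)))) ∩ connectedComponent (wf (m+1)) ∧
          dist z a < (2:ℝ) ^ (-((m+1:ℕ):ℤ)) / 2 ∧ z ∈ leftOf (connectedComponent (wf (m+1)))) ∨
        (∃ b, b ∈ connectedComponent (wf (m+1)) ∩ closure (rightOf (connectedComponent (wf (m+1)))) ∧
          dist z b < (2:ℝ) ^ (-((m+1:ℕ):ℤ)) / 2 ∧ z ∈ rightOf (connectedComponent (wf (m+1)))) := by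
      intro z hz
      rcases delta_cases hconv hIio hIoi (wf (m+1)) _ (hCm_sub hz) with h | h | h
      · exact (hdisj z hz h).elim
      · exact Or.inl h
      · exact Or.inr h
    have hdiam_small : EMetric.diam (connectedComponent (wf m)) ≤
        ENNReal.ofReal ((2:ℝ) ^ (-((m+1:ℕ):ℤ))) := by
      rcases info (wf m) mem_connectedComponent with ⟨a, ha, hda, hLa⟩ | ⟨b, hb, hdb, hRb⟩
      · have hall : ∀ z ∈ connectedComponent (wf m), dist z a < (2:ℝ) ^ (-((m+1:ℕ):ℤ)) / 2 := by
          intro z hz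
          rcases info z hz with ⟨a', ha', hda', -⟩ | ⟨b', hb', hdb', hRz⟩
          · rwa [uniqL hIoi ha' ha] at hda'
          · exact (hdisj (wf (m+1))
              (cc_convex hIio hIoi (wf m) mem_connectedComponent hz
                (hLa _ mem_connectedComponent).le (hRz _ mem_connectedComponent).le)
              mem_connectedComponent).elim
        apply EMetric.diam_le
        intro z hz z' hz'
        rw [edist_le_ofReal (e_pos _).le]
        have h1 := hall z hz
        have h2 := hall z' hz'
        have h3 := dist_triangle z a z'
        rw [dist_comm a z'] at h3
        linarith
      · have hall : ∀ z ∈ connectedComponent (wf m), dist z b < (2:ℝ) ^ (-((m+1:ℕ):ℤ)) / 2 := by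
          intro z hz
          rcases info z hz with ⟨a', ha', hda', hLz⟩ | ⟨b', hb', hdb', -⟩
          · exact (hdisj (wf (m+1))
              (cc_convex hIio hIoi (wf m) hz mem_connectedComponent
                (hLz _ mem_connectedComponent).le (hRb _ mem_connectedComponent).le)
              mem_connectedComponent).elim
          · rwa [uniqR hIio hb' hb] at hdb'
        apply EMetric.diam_le
        intro z hz z' hz'
        rw [edist_le_ofReal (e_pos _).le]
        have h1 := hall z hz
        have h2 := hall z' hz'
        have h3 := dist_triangle z b z'
        rw [dist_comm b z'] at h3
        linarith
    have hcontr := le_trans hw_diam hdiam_small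
    rw [ENNReal.ofReal_le_ofReal_iff (e_pos _).le] at hcontr
    rw [e_succ m] at hcontr
    linarith [e_pos m]
  have hconst : ∀ m, N ≤ m → connectedComponent (wf m) = connectedComponent (wf N) := by
    intro m hm
    induction m, hm using Nat.le_induction with
    | base => rfl
    | succ m hm ih => rw [hstepC m hm, ih]
  have hxC : x ∈ connectedComponent (wf N) := by
    have hcl : x ∈ closure (connectedComponent (wf N)) := by
      rw [Metric.mem_closure_iff]
      intro δ hδ
      obtain ⟨m, hm, hem⟩ := e_small hδ N
      obtain ⟨hw_mem, hw_diam, hw_sub, hw_nx⟩ := hwf m hm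
      rcases delta_cases hconv hIio hIoi (wf m) _ (hw_sub (hf m).2) with
        h | ⟨a, ha, hda, -⟩ | ⟨b, hb, hdb, -⟩
      · exact absurd h hw_nx
      · refine ⟨a, ?_, ?_⟩
        · rw [← hconst m hm]; exact ha.2
        · linarith [e_pos m]
      · refine ⟨b, ?_, ?_⟩
        · rw [← hconst m hm]; exact hb.1
        · linarith [e_pos m]
    rwa [isClosed_connectedComponent.closure_eq] at hcl
  have hfinal := (hwf N le_rfl).2.2.2
  rw [← hconst N le_rfl] at hxC
  exact hfinal hxC
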